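/- Let x₁,…,x_N be pairwise distinct elements of a field F of characteristic 0. Then for every m ≥ 0, h_m(x₁,…,x_N) = Σ_{j=1}^N x_j^{m+N−1} / ∏_{k≠j} (x_j − x_k). -/

import Mathlib

/-- Complete homogeneous polynomial of degree `m` in variables `x j`, `j : ι`. -/
noncomputable def homog {ι : Type*} [Fintype ι] [DecidableEq ι] {R : Type*} [CommSemiring R]
    (m : ℕ) (x : ι → R) : R :=
  ∑ k ∈ Finset.univ.piAntidiag m, ∏ j, x j ^ k j

section Aux

open Finset

variable {F : Type*} [Field F] {ι : Type*} [DecidableEq ι] (x : ι → F)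

lemma homAux_cons (i : ι) (t : Finset ι) (hi : i ∉ t) (n : ℕ) :
    ∑ k ∈ (cons i t hi).piAntidiag n, ∏ j ∈ cons i t hi, x j ^ k j
      = ∑ p ∈ Finset.HasAntidiagonal.antidiagonal n,
          x i ^ p.1 * ∑ k ∈ t.piAntidiag p.2, ∏ j ∈ t, x j ^ k j := by
  rw [Finset.piAntidiag_cons hi, Finset.sum_disjiUnion]
  refine Finset.sum_congr rfl fun p hp => ?_
  rw [Finset.sum_map, Finset.mul_sum]
  refine Finset.sum_congr rfl fun g hg => ?_
  simp only [Finset.mem_piAntidiag] at hg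
  have hgi : g i = 0 := by
    by_contra h; exact hi (hg.2 i h)
  rw [Finset.prod_cons]
  have e1 : ((addRightEmbedding fun j => if j = i then p.1 else 0) g) i = p.1 := by
    simp [addRightEmbedding_apply, hgi]
  have e2 : ∀ j ∈ t, x j ^ (((addRightEmbedding fun j => if j = i then p.1 else 0) g) j)
      = x j ^ g j := by
    intro j hj
    have : j ≠ i := fun h => hi (h ▸ hj)
    simp [addRightEmbedding_apply, this]
  rw [e1, Finset.prod_congr rfl e2]

lemma homAux_zero (s : Finset ι) :
    ∑ k ∈ s.piAntidiag 0, ∏ j ∈ s, x j ^ k j = 1 := by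
  simp

lemma homAux_rec (i : ι) (t : Finset ι) (hi : i ∉ t) (m : ℕ) :
    ∑ k ∈ (cons i t hi).piAntidiag (m + 1), ∏ j ∈ cons i t hi, x j ^ k j
      = x i * (∑ k ∈ (cons i t hi).piAntidiag m, ∏ j ∈ cons i t hi, x j ^ k j)
        + ∑ k ∈ t.piAntidiag (m + 1), ∏ j ∈ t, x j ^ k j := by
  rw [homAux_cons, homAux_cons, Finset.Nat.antidiagonal_succ, Finset.sum_cons,
    Finset.sum_map, Finset.mul_sum]
  simp only [Function.Embedding.coeFn_mk, Function.Embedding.coe_prodMap,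
    Function.Embedding.refl_apply, Prod.map_fst, Prod.map_snd, pow_zero, one_mul, pow_succ]
  rw [add_comm]
  congr 1
  rw [Finset.mul_sum]
  refine Finset.sum_congr rfl fun p hp => ?_
  ring

lemma homAux_singleton (i : ι) (r : ℕ) :
    ∑ k ∈ ({i} : Finset ι).piAntidiag r, ∏ j ∈ ({i} : Finset ι), x j ^ k j = x i ^ r := by
  have hset : ({i} : Finset ι).piAntidiag r = {Pi.single i r} := by
    ext k
    simp only [Finset.mem_piAntidiag, Finset.mem_singleton, Finset.sum_singleton]
    constructor
    · rintro ⟨rfl, h⟩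
      funext j
      by_cases hj : j = i
      · subst hj; simp
      · have : k j = 0 := by
          by_contra hkj
          exact hj (h j hkj)
        simp [Pi.single_apply, hj, this]
    · rintro rfl
      refine ⟨by simp, fun j hj => ?_⟩
      by_contra h
      exact hj (by simp [Pi.single_apply, h])
  rw [hset, Finset.sum_singleton, Finset.prod_singleton, Pi.single_eq_same]

lemma lagrangeAux (t : Finset ι) (ht : t.Nonempty) (hinj : Set.InjOn x t) (y : F) :
    ∑ j ∈ t, (∏ k ∈ t.erase j, (y - x k)) / (∏ k ∈ t.erase j, (x j - x k)) = 1 := by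
  have h := congrArg (Polynomial.eval y) (Lagrange.sum_basis hinj ht)
  simp only [Polynomial.eval_finset_sum, Polynomial.eval_one] at h
  rw [← h]
  refine Finset.sum_congr rfl fun j hj => ?_
  rw [Lagrange.basis, Polynomial.eval_prod]
  have : ∀ k ∈ t.erase j, Polynomial.eval y (Lagrange.basisDivisor (x j) (x k))
      = (x j - x k)⁻¹ * (y - x k) := by
    intro k hk
    simp [Lagrange.basisDivisor]
  rw [Finset.prod_congr rfl this, Finset.prod_mul_distrib, Finset.prod_inv_distrib,
    inv_mul_eq_div]

lemma keyAux (s : Finset ι) : s.Nonempty → Set.InjOn x s → ∀ r : ℕ,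
    ∑ j ∈ s, x j ^ r / ∏ k ∈ s.erase j, (x j - x k)
      = if s.card - 1 ≤ r then
          ∑ k ∈ s.piAntidiag (r - (s.card - 1)), ∏ j ∈ s, x j ^ k j
        else 0 := by
  induction s using Finset.cons_induction with
  | empty => intro h; simp at h
  | cons i t hi ih =>
    intro _ hinj r
    rcases t.eq_empty_or_nonempty with rfl | ht
    · -- singleton case
      have hcons : (cons i (∅ : Finset ι) hi) = {i} := rfl
      rw [hcons, Finset.card_singleton, Nat.sub_self, Nat.sub_zero, if_pos (Nat.zero_le r),
        Finset.sum_singleton, Finset.erase_singleton, Finset.prod_empty, div_one,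
        homAux_singleton]
    · -- t nonempty
      have hinjt : Set.InjOn x t := hinj.mono (by simp [Finset.subset_iff])
      have hc : 1 ≤ t.card := Finset.card_pos.mpr ht
      have hcards : (cons i t hi).card = t.card + 1 := Finset.card_cons hi
      have hxij : ∀ j ∈ t, x j ≠ x i := by
        intro j hj h
        exact hi (hinj (by simp [hj]) (by simp) h ▸ hj)
      have hsub : ∀ j ∈ t, x j - x i ≠ 0 := fun j hj => sub_ne_zero.mpr (hxij j hj)
      have hsub' : ∀ j ∈ t, x i - x j ≠ 0 := fun j hj =>
        sub_ne_zero.mpr fun h => (hxij j hj) h.symm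
      have hDt : ∀ j ∈ t, ∏ k ∈ t.erase j, (x j - x k) ≠ 0 := by
        intro j hj
        refine Finset.prod_ne_zero_iff.mpr fun k hk => ?_
        have hkt := Finset.mem_of_mem_erase hk
        have hkj := Finset.ne_of_mem_erase hk
        exact sub_ne_zero.mpr fun h => hkj (hinjt hkt hj h.symm)
      have hQ : ∏ k ∈ t, (x i - x k) ≠ 0 :=
        Finset.prod_ne_zero_iff.mpr fun k hk => hsub' k hk
      have herase_i : (cons i t hi).erase i = t := Finset.erase_cons hi
      have herase_j : ∀ j ∈ t, (cons i t hi).erase j = cons i (t.erase j)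
          (fun h => hi (Finset.mem_of_mem_erase h)) := by
        intro j hj
        have hji : j ≠ i := fun h => hi (h ▸ hj)
        ext a
        simp only [Finset.mem_erase, Finset.mem_cons]
        constructor
        · rintro ⟨haj, (rfl | hat)⟩
          · exact Or.inl rfl
          · exact Or.inr ⟨haj, hat⟩
        · rintro (rfl | ⟨haj, hat⟩)
          · exact ⟨hji.symm, Or.inl rfl⟩
          · exact ⟨haj, Or.inr hat⟩
      have hDsplit : ∀ j ∈ t, ∏ k ∈ (cons i t hi).erase j, (x j - x k)
          = (x j - x i) * ∏ k ∈ t.erase j, (x j - x k) := by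
        intro j hj
        rw [herase_j j hj, Finset.prod_cons]
      -- inner induction on r
      induction r with
      | zero =>
        rw [if_neg (by omega)]
        rw [Finset.sum_cons]
        simp only [pow_zero]
        rw [herase_i]
        have hterm : ∀ j ∈ t, (1 : F) / ∏ k ∈ (cons i t hi).erase j, (x j - x k)
            = -(((∏ k ∈ t.erase j, (x i - x k)) / ∏ k ∈ t.erase j, (x j - x k))
                / ∏ k ∈ t, (x i - x k)) := by
          intro j hj
          rw [hDsplit j hj, ← Finset.mul_prod_erase t (fun k => x i - x k) hj]
          have h1 := hsub j hj
          have h2 := hsub' j hj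
          have h3 := hDt j hj
          have h4 : ∏ k ∈ t.erase j, (x i - x k) ≠ 0 := by
            refine Finset.prod_ne_zero_iff.mpr fun k hk => ?_
            exact hsub' k (Finset.mem_of_mem_erase hk)
          field_simp
          ring
        rw [Finset.sum_congr rfl hterm, Finset.sum_neg_distrib, ← Finset.sum_div,
          lagrangeAux x t ht hinjt (x i)]
        ring
      | succ r ihr =>
        -- step: LHS (r+1) = x i * LHS r + LHS_t r
        have hstep : ∑ j ∈ cons i t hi, x j ^ (r + 1) / ∏ k ∈ (cons i t hi).erase j, (x j - x k)
            = x i * (∑ j ∈ cons i t hi, x j ^ r / ∏ k ∈ (cons i t hi).erase j, (x j - x k))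
              + ∑ j ∈ t, x j ^ r / ∏ k ∈ t.erase j, (x j - x k) := by
          rw [Finset.sum_cons, Finset.sum_cons, mul_add, Finset.mul_sum, add_assoc,
            ← Finset.sum_add_distrib]
          congr 1
          · rw [pow_succ, mul_comm (x i ^ r) (x i), mul_div_assoc]
          · refine Finset.sum_congr rfl fun j hj => ?_
            rw [hDsplit j hj]
            have h1 := hsub j hj
            have h3 := hDt j hj
            field_simp
            ring
        rw [hstep, ihr, ih ht hinjt r]
        have hcards' : (cons i t hi).card - 1 = t.card := by omega
        rw [hcards']
        by_cases h1 : t.card ≤ r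
        · rw [if_pos h1, if_pos (show t.card - 1 ≤ r by omega),
            if_pos (show t.card ≤ r + 1 by omega)]
          have e1 : r - (t.card - 1) = (r - t.card) + 1 := by omega
          have e2 : r + 1 - t.card = (r - t.card) + 1 := by omega
          rw [e1, e2, homAux_rec]
        · by_cases h2 : t.card = r + 1
          · rw [if_neg h1, if_pos (show t.card - 1 ≤ r by omega),
              if_pos (show t.card ≤ r + 1 by omega)]
            have e1 : r - (t.card - 1) = 0 := by omega
            have e2 : r + 1 - t.card = 0 := by omega
            rw [e1, e2, homAux_zero, homAux_zero, mul_zero, zero_add]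
          · rw [if_neg h1, if_neg (show ¬ (t.card - 1 ≤ r) by omega),
              if_neg (show ¬ (t.card ≤ r + 1) by omega)]
            simp
  
end Aux

theorem stmt_4 (F : Type*) [Field F] [CharZero F] (N : ℕ) (hN : 1 ≤ N)
    (x : Fin N → F) (hx : Function.Injective x) (m : ℕ) :
    homog m x
      = ∑ j : Fin N, x j ^ (m + N - 1) / ∏ k ∈ Finset.univ.erase j, (x j - x k) := by
  have : Nonempty (Fin N) := Fin.pos_iff_nonempty.mp hN
  have h := keyAux x Finset.univ Finset.univ_nonempty hx.injOn (m + N - 1)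
  rw [Finset.card_univ, Fintype.card_fin] at h
  rw [if_pos (by omega : N - 1 ≤ m + N - 1), (by omega : m + N - 1 - (N - 1) = m)] at h
  exact h.symm
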